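/- Let E ⊆ ℝ be the standard middle-thirds Cantor set and U = (0,1) \ E. Then the boundary Ẽ of Û = {(x, t) ∈ ℝ × ℝ : x ∈ U, |t| < d_E(x)} in ℝ² is connected. -/
import Mathlib

open Set Metric

lemma myOne_mem_preCantorSet (n : ℕ) : (1:ℝ) ∈ preCantorSet n := by
  induction n with
  | zero => simp [preCantorSet]
  | succ n ih => exact Or.inr ⟨1, ih, by norm_num⟩

lemma myOne_mem_cantorSet : (1:ℝ) ∈ cantorSet :=
  Set.mem_iInter.mpr myOne_mem_preCantorSet

lemma myPreCantorSet_subset_Icc (n : ℕ) : preCantorSet n ⊆ Set.Icc 0 1 := by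
  induction n with
  | zero => exact subset_rfl
  | succ n ih =>
    rintro x (⟨y, hy, rfl⟩ | ⟨y, hy, rfl⟩) <;>
      obtain ⟨h0, h1⟩ := ih hy <;>
      constructor <;> [linarith; linarith; linarith; linarith]

lemma myMem_cantorSet_of_third {y : ℝ} (hy1 : y ≤ 1) (hy : y / 3 ∈ cantorSet) :
    y ∈ cantorSet := by
  rw [cantorSet, Set.mem_iInter]
  intro n
  rcases Set.mem_iInter.mp hy (n + 1) with ⟨a, ha, hae⟩ | ⟨a, ha, hae⟩
  · have : a = y := by
      have : a / 3 = y / 3 := hae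
      linarith
    rwa [← this]
  · have h0 : (0:ℝ) ≤ a := (myPreCantorSet_subset_Icc n ha).1
    have : (2 + a) / 3 = y / 3 := hae
    linarith

lemma myMem_cantorSet_of_right {y : ℝ} (hy0 : 0 ≤ y) (hy : (2 + y) / 3 ∈ cantorSet) :
    y ∈ cantorSet := by
  rw [cantorSet, Set.mem_iInter]
  intro n
  rcases Set.mem_iInter.mp hy (n + 1) with ⟨a, ha, hae⟩ | ⟨a, ha, hae⟩
  · have h1 : a ≤ 1 := (myPreCantorSet_subset_Icc n ha).2
    have : a / 3 = (2 + y) / 3 := hae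
    linarith
  · have : (2 + a) / 3 = (2 + y) / 3 := hae
    have : a = y := by linarith
    rwa [← this]

lemma myHalf_notMem_cantorSet : (1/2 : ℝ) ∉ cantorSet := by
  intro h
  rcases Set.mem_iInter.mp h 1 with ⟨a, ha, hae⟩ | ⟨a, ha, hae⟩
  · have h1 : a ≤ 1 := (myPreCantorSet_subset_Icc 0 ha).2
    have : a / 3 = 1/2 := hae
    linarith
  · have h0 : (0:ℝ) ≤ a := (myPreCantorSet_subset_Icc 0 ha).1
    have : (2 + a) / 3 = 1/2 := hae
    linarith

lemma myCantor_approx (n : ℕ) : ∀ x ∈ Set.Icc (0:ℝ) 1, ∃ y ∈ Set.Icc (0:ℝ) 1,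
    |x - y| ≤ (1/3 : ℝ)^n ∧ y ∉ cantorSet := by
  induction n with
  | zero =>
    intro x hx
    refine ⟨1/2, by norm_num, ?_, myHalf_notMem_cantorSet⟩
    rw [abs_sub_le_iff]
    constructor <;> [skip; skip] <;> simp only [pow_zero] <;>
      [linarith [hx.2]; linarith [hx.1]]
  | succ n ih =>
    intro x hx
    by_cases hx1 : x ≤ 1/3
    · obtain ⟨y, hy, hd, hyc⟩ := ih (3*x) ⟨by linarith [hx.1], by linarith⟩
      refine ⟨y/3, ⟨by linarith [hy.1], by linarith [hy.2]⟩, ?_,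
        fun h => hyc (myMem_cantorSet_of_third hy.2 h)⟩
      have he : x - y/3 = (3*x - y)/3 := by ring
      rw [he, abs_div, abs_of_pos (by norm_num : (0:ℝ) < 3), pow_succ]
      nlinarith
    · by_cases hx2 : 2/3 ≤ x
      · obtain ⟨y, hy, hd, hyc⟩ := ih (3*x - 2) ⟨by linarith, by linarith [hx.2]⟩
        refine ⟨(2+y)/3, ⟨by linarith [hy.1], by linarith [hy.2]⟩, ?_,
          fun h => hyc (myMem_cantorSet_of_right hy.1 h)⟩
        have he : x - (2+y)/3 = ((3*x - 2) - y)/3 := by ring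
        rw [he, abs_div, abs_of_pos (by norm_num : (0:ℝ) < 3), pow_succ]
        nlinarith
      · refine ⟨x, hx, by rw [sub_self, abs_zero]; positivity, ?_⟩
        intro h
        rcases Set.mem_iInter.mp h 1 with ⟨a, ha, hae⟩ | ⟨a, ha, hae⟩
        · have h1 : a ≤ 1 := (myPreCantorSet_subset_Icc 0 ha).2
          have : a / 3 = x := hae
          linarith
        · have h0 : (0:ℝ) ≤ a := (myPreCantorSet_subset_Icc 0 ha).1
          have : (2 + a) / 3 = x := hae
          linarith

lemma myDense_compl : ∀ x ∈ Set.Icc (0:ℝ) 1,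
    x ∈ closure (Set.Ioo (0:ℝ) 1 \ cantorSet) := by
  intro x hx
  rw [Metric.mem_closure_iff]
  intro ε hε
  obtain ⟨n, hn⟩ := exists_pow_lt_of_lt_one hε (by norm_num : (1/3 : ℝ) < 1)
  obtain ⟨y, hy, hd, hyc⟩ := myCantor_approx n x hx
  have hy0 : y ≠ 0 := fun h => hyc (h ▸ zero_mem_cantorSet)
  have hy1 : y ≠ 1 := fun h => hyc (h ▸ myOne_mem_cantorSet)
  refine ⟨y, ⟨⟨lt_of_le_of_ne hy.1 (Ne.symm hy0), lt_of_le_of_ne hy.2 hy1⟩, hyc⟩, ?_⟩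
  rw [Real.dist_eq]
  exact lt_of_le_of_lt hd hn
theorem frontier_hat_cantor_complement_connected :
    IsConnected (frontier {p : ℝ × ℝ |
        p.1 ∈ Set.Ioo (0 : ℝ) 1 \ cantorSet ∧
          |p.2| < Metric.infDist p.1 cantorSet}) := by
  set S : Set (ℝ × ℝ) := {p : ℝ × ℝ |
      p.1 ∈ Set.Ioo (0 : ℝ) 1 \ cantorSet ∧ |p.2| < Metric.infDist p.1 cantorSet} with hS
  have hne : cantorSet.Nonempty := ⟨0, zero_mem_cantorSet⟩
  have hdc : Continuous fun x : ℝ => infDist x cantorSet := continuous_infDist_pt _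
  have hmem0 : ∀ x : ℝ, x ∈ cantorSet → infDist x cantorSet = 0 :=
    fun x h => infDist_zero_of_mem h
  have hpos : ∀ x : ℝ, x ∉ cantorSet → 0 < infDist x cantorSet := fun x h =>
    (isClosed_cantorSet.notMem_iff_infDist_pos hne).mp h
  have hS_open : IsOpen S := by
    have h1 : IsOpen {p : ℝ × ℝ | p.1 ∈ Set.Ioo (0:ℝ) 1 \ cantorSet} :=
      (isOpen_Ioo.sdiff isClosed_cantorSet).preimage continuous_fst
    have h2 : IsOpen {p : ℝ × ℝ | |p.2| < infDist p.1 cantorSet} :=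
      isOpen_lt (continuous_abs.comp continuous_snd) (hdc.comp continuous_fst)
    exact h1.inter h2
  set K : Set (ℝ × ℝ) :=
    {p : ℝ × ℝ | p.1 ∈ Set.Icc (0:ℝ) 1 ∧ |p.2| ≤ infDist p.1 cantorSet} with hK
  have hK_closed : IsClosed K := by
    have h1 : IsClosed {p : ℝ × ℝ | p.1 ∈ Set.Icc (0:ℝ) 1} :=
      isClosed_Icc.preimage continuous_fst
    have h2 : IsClosed {p : ℝ × ℝ | |p.2| ≤ infDist p.1 cantorSet} :=
      isClosed_le (continuous_abs.comp continuous_snd) (hdc.comp continuous_fst)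
    exact h1.inter h2
  have hsub : S ⊆ K := by
    rintro p ⟨⟨h1, h2⟩, hlt⟩
    exact ⟨⟨h1.1.le, h1.2.le⟩, hlt.le⟩
  have hclosure : closure S = K := by
    refine subset_antisymm (closure_minimal hsub hK_closed) ?_
    rintro p ⟨hp1, hp2⟩
    by_cases hd0 : p.1 ∈ cantorSet
    · have hz : infDist p.1 cantorSet = 0 := hmem0 _ hd0
      have hp2z : p.2 = 0 := by
        rw [hz] at hp2
        exact abs_nonpos_iff.mp hp2
      have hcl := myDense_compl p.1 hp1
      have hmaps : (fun x : ℝ => (x, (0:ℝ))) '' (Set.Ioo (0:ℝ) 1 \ cantorSet) ⊆ S := by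
        rintro q ⟨x, hx, rfl⟩
        exact ⟨hx, by simpa using hpos x hx.2⟩
      have hmem : (p.1, (0:ℝ)) ∈ closure S := by
        have h1 : (p.1, (0:ℝ)) ∈
            (fun x : ℝ => (x, (0:ℝ))) '' closure (Set.Ioo (0:ℝ) 1 \ cantorSet) :=
          ⟨p.1, hcl, rfl⟩
        have h2 := image_closure_subset_closure_image
          (f := fun x : ℝ => (x, (0:ℝ))) (continuous_id.prodMk continuous_const) h1
        exact closure_mono hmaps h2
      have hpe : p = (p.1, (0:ℝ)) := by rw [← hp2z]
      rw [hpe]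
      exact hmem
    · have hdpos := hpos _ hd0
      have h0 : p.1 ≠ 0 := fun h => hd0 (h ▸ zero_mem_cantorSet)
      have h1 : p.1 ≠ 1 := fun h => hd0 (h ▸ myOne_mem_cantorSet)
      have hIoo : p.1 ∈ Set.Ioo (0:ℝ) 1 \ cantorSet :=
        ⟨⟨lt_of_le_of_ne hp1.1 (Ne.symm h0), lt_of_le_of_ne hp1.2 h1⟩, hd0⟩
      rcases lt_or_eq_of_le hp2 with hlt | heq
      · exact subset_closure ⟨hIoo, hlt⟩
      · have habs : 0 < |p.2| := by rw [heq]; exact hdpos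
        have hmaps : (fun r : ℝ => (p.1, r * p.2)) '' Set.Ico (0:ℝ) 1 ⊆ S := by
          rintro q ⟨r, hr, rfl⟩
          refine ⟨hIoo, ?_⟩
          show |r * p.2| < infDist p.1 cantorSet
          rw [abs_mul, abs_of_nonneg hr.1]
          calc r * |p.2| < 1 * |p.2| := mul_lt_mul_of_pos_right hr.2 habs
            _ = |p.2| := one_mul _
            _ ≤ infDist p.1 cantorSet := le_of_eq heq
        have hcl1 : (1:ℝ) ∈ closure (Set.Ico (0:ℝ) 1) := by
          rw [closure_Ico (by norm_num : (0:ℝ) ≠ 1)]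
          exact ⟨zero_le_one, le_refl 1⟩
        have h2 := image_closure_subset_closure_image
          (f := fun r : ℝ => (p.1, r * p.2))
          (continuous_const.prodMk (continuous_id.mul continuous_const))
          ⟨1, hcl1, rfl⟩
        have hpe : p = (p.1, 1 * p.2) := by rw [one_mul]
        rw [hpe]
        exact closure_mono hmaps h2
  have hfr : frontier S = K \ S := by
    rw [frontier, hS_open.interior_eq, hclosure]
  set G : Set (ℝ × ℝ) := ((fun x : ℝ => (x, infDist x cantorSet)) '' Set.Icc 0 1) ∪
      ((fun x : ℝ => (x, -infDist x cantorSet)) '' Set.Icc 0 1) with hG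
  have hKS : K \ S = G := by
    apply subset_antisymm
    · rintro p ⟨⟨hp1, hp2⟩, hpS⟩
      have heq : |p.2| = infDist p.1 cantorSet := by
        rcases lt_or_eq_of_le hp2 with hlt | heq
        · exfalso
          apply hpS
          refine ⟨?_, hlt⟩
          by_contra hx
          have hz : infDist p.1 cantorSet = 0 := by
            rcases em (p.1 ∈ cantorSet) with h | h
            · exact hmem0 _ h
            · have hd : p.1 = 0 ∨ p.1 = 1 := by
                by_contra hc
                push_neg at hc
                exact hx ⟨⟨lt_of_le_of_ne hp1.1 (Ne.symm hc.1),
                  lt_of_le_of_ne hp1.2 hc.2⟩, h⟩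
              rcases hd with h0 | h0 <;> rw [h0]
              · exact hmem0 _ zero_mem_cantorSet
              · exact hmem0 _ myOne_mem_cantorSet
          rw [hz] at hlt
          exact absurd hlt (not_lt.mpr (abs_nonneg _))
        · exact heq
      rcases (abs_eq infDist_nonneg).mp heq with h | h
      · exact Or.inl ⟨p.1, hp1, by dsimp only; rw [← h]⟩
      · exact Or.inr ⟨p.1, hp1, by dsimp only; rw [← h]⟩
    · rintro p (⟨x, hx, rfl⟩ | ⟨x, hx, rfl⟩)
      · refine ⟨⟨hx, le_of_eq (abs_of_nonneg infDist_nonneg)⟩, ?_⟩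
        rintro ⟨-, hlt⟩
        rw [show |((fun x : ℝ => (x, infDist x cantorSet)) x).2| = infDist x cantorSet from
          abs_of_nonneg infDist_nonneg] at hlt
        exact lt_irrefl _ hlt
      · refine ⟨⟨hx, ?_⟩, ?_⟩
        · show |-infDist x cantorSet| ≤ infDist x cantorSet
          rw [abs_neg]
          exact le_of_eq (abs_of_nonneg infDist_nonneg)
        · rintro ⟨-, hlt⟩
          rw [show |((fun x : ℝ => (x, -infDist x cantorSet)) x).2| = infDist x cantorSet by
            dsimp only; rw [abs_neg]; exact abs_of_nonneg infDist_nonneg] at hlt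
          exact lt_irrefl _ hlt
  rw [hfr, hKS]
  have hc1 : IsConnected ((fun x : ℝ => (x, infDist x cantorSet)) '' Set.Icc 0 1) :=
    (isConnected_Icc zero_le_one).image _ (continuous_id.prodMk hdc).continuousOn
  have hc2 : IsConnected ((fun x : ℝ => (x, -infDist x cantorSet)) '' Set.Icc 0 1) :=
    (isConnected_Icc zero_le_one).image _ (continuous_id.prodMk hdc.neg).continuousOn
  refine IsConnected.union ⟨((0:ℝ), (0:ℝ)), ⟨0, Set.left_mem_Icc.mpr zero_le_one, ?_⟩,
    ⟨0, Set.left_mem_Icc.mpr zero_le_one, ?_⟩⟩ hc1 hc2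
  · simp [hmem0 0 zero_mem_cantorSet]
  · simp [hmem0 0 zero_mem_cantorSet]
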